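/- Let D be an integral domain with quotient field K, T an overring of D, ⋆ a semistar operation on D and ⋆' a semistar operation on T. The following are equivalent: (i) T is (⋆,⋆')-flat over D; (ii) T is (⋆,⋆')-linked to D and, for each prime ideal P of D, either (PT)^{⋆'_f} = T^{⋆'} or T ⊆ D_P; (iii) T is (⋆,⋆')-linked to D and, for each nonzero x ∈ T, ((D :_D xD)·T)^{⋆'_f} = T^{⋆'}; (iv) T is (⋆,⋆')-linked to D and T^{⋆̃'} = ∩{D_{Q∩D} : Q ∈ M(⋆'_f)}. -/

import Mathlib

open Pointwise

/-! Basic framework for semistar operations on an integral domain `D`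
with quotient field `K`. Submodules of `K` play the role of the
`D`-submodules of the quotient field. -/

section Generic

variable (R : Type*) (K : Type*) [CommRing R] [Field K] [Algebra R K]

/-- A semistar operation on `R` (with ambient field `K`): a map on the nonzero
`R`-submodules of `K` satisfying (⋆₁), (⋆₂), (⋆₃). The map is total on
`Submodule R K`, but the axioms are only imposed on nonzero submodules. -/
structure SemistarOp where
  toFun : Submodule R K → Submodule R K
  smul' : ∀ x : K, x ≠ 0 → ∀ E : Submodule R K, E ≠ ⊥ → toFun (x • E) = x • toFun E
  mono' : ∀ E F : Submodule R K, E ≠ ⊥ → F ≠ ⊥ → E ≤ F → toFun E ≤ toFun F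
  le_star' : ∀ E : Submodule R K, E ≠ ⊥ → E ≤ toFun E
  idem' : ∀ E : Submodule R K, E ≠ ⊥ → toFun (toFun E) = toFun E

variable {R K}

/-- The `R`-submodule of `K` generated by (the image of) an ideal of `R`. -/
def idealSub (I : Ideal R) : Submodule R K := Submodule.map (Algebra.linearMap R K) I

/-- The finite-type operation `⋆_f` associated to (the function underlying) a semistar
operation: `E^{⋆_f} = ∪ { F^⋆ : F nonzero finitely generated, F ⊆ E }`. -/
def starF (f : Submodule R K → Submodule R K) (E : Submodule R K) : Submodule R K :=
  sSup {G | ∃ F : Submodule R K, F.FG ∧ F ≠ ⊥ ∧ F ≤ E ∧ G = f F}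

/-- `I` is a quasi-⋆-ideal: `I ≠ 0` and `I^⋆ ∩ R = I`. -/
def QuasiIdeal (f : Submodule R K → Submodule R K) (I : Ideal R) : Prop :=
  I ≠ ⊥ ∧ Submodule.comap (Algebra.linearMap R K) (f (idealSub I)) = I

/-- `I` is a quasi-⋆-prime: a prime quasi-⋆-ideal. -/
def QuasiPrime (f : Submodule R K → Submodule R K) (I : Ideal R) : Prop :=
  QuasiIdeal f I ∧ I.IsPrime

/-- `I` is a quasi-⋆-maximal: maximal among proper quasi-⋆-ideals. -/
def QuasiMax (f : Submodule R K → Submodule R K) (I : Ideal R) : Prop :=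
  QuasiIdeal f I ∧ I ≠ ⊤ ∧ ∀ J : Ideal R, QuasiIdeal f J → J ≠ ⊤ → I ≤ J → I = J

/-- The localization `E·R_Q` of a submodule `E` of `K` at (the complement of) `Q`:
for prime `Q` this is `{x ∈ K : s·x ∈ E for some s ∉ Q}`. -/
def locSub (Q : Ideal R) (E : Submodule R K) : Submodule R K :=
  Submodule.span R {x : K | ∃ s : R, s ∉ Q ∧ algebraMap R K s * x ∈ E}

/-- The spectral semistar operation `⋆̃` associated to `⋆`:
`E^{⋆̃} = ∩ { E R_Q : Q quasi-⋆_f-maximal }` (equal to `K` if there are none). -/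
def tildeOp (f : Submodule R K → Submodule R K) (E : Submodule R K) : Submodule R K :=
  ⨅ (Q : Ideal R) (_ : QuasiMax (starF f) Q), locSub Q E

/-- The `v`-operation `E ↦ (R :_K (R :_K E))`. -/
def vOp (E : Submodule R K) : Submodule R K := 1 / (1 / E)

/-- The `t`-operation: the finite-type operation associated to `v`. -/
def tOp : Submodule R K → Submodule R K := starF (vOp (R := R) (K := K))

/-- `R` is a Prüfer ⋆-multiplication domain: every nonzero finitely generated ideal `F`
is ⋆_f-invertible, i.e. `(F·(R :_K F))^{⋆_f} = R^⋆`. -/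
def PSMD (f : Submodule R K → Submodule R K) : Prop :=
  ∀ F : Ideal R, F ≠ ⊥ → F.FG →
    starF f (idealSub F * ((1 : Submodule R K) / idealSub F)) = f 1

/-- The content ideal of a polynomial: the ideal generated by its coefficients. -/
def contentI (h : Polynomial R) : Ideal R := Ideal.span (Set.range h.coeff)

/-- The Nagata ring `Na(R,⋆) = R[X]_{N(⋆)}`, realized as the subset
`{g/h : g, h ∈ R[X], h ≠ 0, c(h)^⋆ = R^⋆}` of the field `K(X)` of rational functions. -/
def NaSet (f : Submodule R K → Submodule R K) : Set (RatFunc K) :=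
  {x | ∃ g h : Polynomial R, h ≠ 0 ∧ f (idealSub (contentI h)) = f 1 ∧
    x * algebraMap (Polynomial K) (RatFunc K) (h.map (algebraMap R K)) =
      algebraMap (Polynomial K) (RatFunc K) (g.map (algebraMap R K))}

/-- The Nagata ring as a subring of `K(X)` (the set `NaSet` is multiplicatively
saturated, so it coincides with the subring it generates). -/
noncomputable def NaSub (f : Submodule R K → Submodule R K) : Subring (RatFunc K) :=
  Subring.closure (NaSet f)

/-- A subset `S` of `K` is integrally closed (in `K`) if every element of `K` which is a root
of a monic polynomial with coefficients in `S` lies in `S`. -/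
def IntClosedSet (S : Set K) : Prop :=
  ∀ x : K, (∃ p : Polynomial K, p.Monic ∧ (∀ n, p.coeff n ∈ S) ∧ p.eval x = 0) → x ∈ S

/-- A subset `S` of `K` is seminormal if `x² ∈ S` and `x³ ∈ S` imply `x ∈ S`. -/
def SeminormalSet (S : Set K) : Prop := ∀ x : K, x ^ 2 ∈ S → x ^ 3 ∈ S → x ∈ S

/-- `T` is `(f,g)`-linked to `T` (case `D = T` of linkedness). -/
def LinkedSelf (f g : Submodule R K → Submodule R K) : Prop :=
  ∀ G : Ideal R, G ≠ ⊥ → G.FG → f (idealSub G) = f 1 → g (idealSub G) = g 1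

end Generic

section Overring

variable {D : Type*} {K : Type*} [CommRing D] [Field K] [Algebra D K]

/-- The `T`-submodule `E·T` of `K` generated by a `D`-submodule `E` of `K`. -/
def extT (T : Subalgebra D K) (E : Submodule D K) : Submodule ↥T K :=
  Submodule.span ↥T (E : Set K)

/-- `T` is `(⋆,⋆')`-linked to `D`: for every nonzero finitely generated integral ideal `F`
of `D`, `F^⋆ = D^⋆` implies `(FT)^{⋆'} = T^{⋆'}`. -/
def LinkedF (f : Submodule D K → Submodule D K) (T : Subalgebra D K)
    (g : Submodule ↥T K → Submodule ↥T K) : Prop :=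
  ∀ F : Ideal D, F ≠ ⊥ → F.FG → f (idealSub F) = f 1 → g (extT T (idealSub F)) = g 1

/-- `T` is `t`-linked to `(D,⋆)`: `T` is `(⋆, t_T)`-linked to `D`. -/
def TLinked (f : Submodule D K → Submodule D K) (T : Subalgebra D K) : Prop :=
  LinkedF f T (tOp (R := ↥T) (K := K))

/-- The semistar operation `ℓ_{⋆,T}` on `T`:
`E^ℓ = ∩ { E T_{D∖P} : P quasi-⋆_f-prime of D }` (equal to `K` if there are none). -/
def ellOp (f : Submodule D K → Submodule D K) (T : Subalgebra D K)
    (E : Submodule ↥T K) : Submodule ↥T K :=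
  ⨅ (P : Ideal D) (_ : QuasiPrime (starF f) P),
    Submodule.span ↥T {x : K | ∃ r : D, r ∉ P ∧ algebraMap D K r * x ∈ E}

/-- The localization `D_P` of `D` at a prime `P`, as a subalgebra of `K`. -/
def Dloc (P : Ideal D) : Subalgebra D K :=
  Algebra.adjoin D {x : K | ∃ r : D, r ∉ P ∧ algebraMap D K r * x ∈ (⊥ : Subalgebra D K)}

/-- The localization `T_{D∖P}` of an overring `T` at the multiplicative set `D∖P`,
as a subalgebra of `K`. -/
def TlocD (T : Subalgebra D K) (P : Ideal D) : Subalgebra D K :=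
  Algebra.adjoin D {x : K | ∃ r : D, r ∉ P ∧ algebraMap D K r * x ∈ T}

/-- The localization `T_Q` of an overring `T` at a prime `Q` of `T`,
as a subalgebra of `K`. -/
def TlocQ (T : Subalgebra D K) (Q : Ideal ↥T) : Subalgebra D K :=
  Algebra.adjoin D {x : K | ∃ t : ↥T, t ∉ Q ∧ (t : K) * x ∈ T}

/-- `T` is `(⋆,⋆')`-flat over `D`: `T` is `(⋆,⋆')`-linked to `D` and `D_{Q∩D} = T_Q`
for every quasi-⋆'_f-prime `Q` of `T`. -/
def FlatF (f : Submodule D K → Submodule D K) (T : Subalgebra D K)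
    (g : Submodule ↥T K → Submodule ↥T K) : Prop :=
  LinkedF f T g ∧
    ∀ Q : Ideal ↥T, QuasiPrime (starF g) Q →
      Dloc (Q.comap (algebraMap D ↥T)) = TlocQ T Q

/-- `B` is a flat `A`-module (for subalgebras `A ⊆ B` of `K`, with the module structure
coming from the inclusion). -/
def FlatPair (A B : Subalgebra D K) : Prop :=
  ∃ h : A ≤ B, @Module.Flat ↥A ↥B _ _ ((Subalgebra.inclusion h).toRingHom.toModule)

/-- `B` is a flat `A`-module, for subrings `A ⊆ B` of a commutative ring. -/
def FlatSubring {L : Type*} [CommRing L] (A B : Subring L) : Prop :=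
  ∃ h : A ≤ B, @Module.Flat ↥A ↥B _ _ ((Subring.inclusion h).toModule)

end Overring

section StarFLemmas

variable {R K : Type*} [CommRing R] [Field K] [Algebra R K]

theorem starF_mono (f : Submodule R K → Submodule R K) {E E' : Submodule R K} (h : E ≤ E') :
    starF f E ≤ starF f E' := by
  apply sSup_le_sSup
  rintro G ⟨F, hfg, hne, hle, rfl⟩
  exact ⟨F, hfg, hne, hle.trans h, rfl⟩

theorem le_starF_of (f : Submodule R K → Submodule R K) {F E : Submodule R K}
    (hfg : F.FG) (hne : F ≠ ⊥) (hle : F ≤ E) : f F ≤ starF f E :=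
  le_sSup ⟨F, hfg, hne, hle, rfl⟩

variable (s : SemistarOp R K)

theorem mem_starF {E : Submodule R K} (hE : E ≠ ⊥) {x : K} :
    x ∈ starF s.toFun E ↔ ∃ F : Submodule R K, F.FG ∧ F ≠ ⊥ ∧ F ≤ E ∧ x ∈ s.toFun F := by
  constructor
  · intro hx
    obtain ⟨z, hzE, hz0⟩ := Submodule.exists_mem_ne_zero_of_ne_bot hE
    have hnonempty : {G | ∃ F : Submodule R K, F.FG ∧ F ≠ ⊥ ∧ F ≤ E ∧ G = s.toFun F}.Nonempty := by
      refine ⟨s.toFun (Submodule.span R {z}), Submodule.span R {z}, Submodule.fg_span_singleton z, ?_, ?_, rfl⟩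
      · simpa using hz0
      · simpa [Submodule.span_le] using hzE
    have hdir : DirectedOn (· ≤ ·)
        {G | ∃ F : Submodule R K, F.FG ∧ F ≠ ⊥ ∧ F ≤ E ∧ G = s.toFun F} := by
      rintro _ ⟨F₁, hfg₁, hne₁, hle₁, rfl⟩ _ ⟨F₂, hfg₂, hne₂, hle₂, rfl⟩
      refine ⟨s.toFun (F₁ ⊔ F₂), ⟨F₁ ⊔ F₂, hfg₁.sup hfg₂, ?_, sup_le hle₁ hle₂, rfl⟩, ?_, ?_⟩
      · intro hb; exact hne₁ (by simpa using (le_sup_left.trans hb.le : F₁ ≤ ⊥))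
      · exact s.mono' _ _ hne₁ (fun hb => hne₁ (by simpa using (le_sup_left.trans hb.le : F₁ ≤ ⊥)))
          le_sup_left
      · exact s.mono' _ _ hne₂ (fun hb => hne₂ (by simpa using (le_sup_right.trans hb.le : F₂ ≤ ⊥)))
          le_sup_right
    rw [starF, Submodule.mem_sSup_of_directed hnonempty hdir] at hx
    obtain ⟨_, ⟨F, hfg, hne, hle, rfl⟩, hxF⟩ := hx
    exact ⟨F, hfg, hne, hle, hxF⟩
  · rintro ⟨F, hfg, hne, hle, hx⟩
    exact le_starF_of s.toFun hfg hne hle hx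

theorem le_starF {E : Submodule R K} (hE : E ≠ ⊥) : E ≤ starF s.toFun E := by
  intro x hx
  by_cases hx0 : x = 0
  · simp [hx0]
  · refine (mem_starF s hE).2 ⟨Submodule.span R {x}, Submodule.fg_span_singleton x, by simpa using hx0,
      by simpa [Submodule.span_le] using hx, ?_⟩
    exact s.le_star' _ (by simpa using hx0) (Submodule.mem_span_singleton_self x)

theorem starF_ne_bot {E : Submodule R K} (hE : E ≠ ⊥) : starF s.toFun E ≠ ⊥ :=
  fun h => hE (le_bot_iff.1 (h ▸ le_starF s hE))

theorem starF_le {E : Submodule R K} (hE : E ≠ ⊥) : starF s.toFun E ≤ s.toFun E := by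
  intro x hx
  obtain ⟨F, hfg, hne, hle, hxF⟩ := (mem_starF s hE).1 hx
  exact s.mono' _ _ hne hE hle hxF

theorem starF_one : starF s.toFun (1 : Submodule R K) = s.toFun 1 := by
  have h1 : (1 : Submodule R K) ≠ ⊥ := by
    intro h
    have : (1 : K) ∈ (⊥ : Submodule R K) := h ▸ (Submodule.one_le.1 le_rfl)
    simp at this
  refine le_antisymm (starF_le s h1) (le_starF_of s.toFun ?_ h1 le_rfl)
  rw [Submodule.one_eq_span]
  exact Submodule.fg_span_singleton 1

theorem starF_idem {E : Submodule R K} (hE : E ≠ ⊥) :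
    starF s.toFun (starF s.toFun E) = starF s.toFun E := by
  refine le_antisymm ?_ (le_starF s (starF_ne_bot s hE))
  intro x hx
  obtain ⟨F, hfg, hne, hle, hxF⟩ := (mem_starF s (starF_ne_bot s hE)).1 hx
  obtain ⟨S, rfl⟩ := hfg
  obtain ⟨z, hzE, hz0⟩ := Submodule.exists_mem_ne_zero_of_ne_bot hE
  -- for each nonzero y ∈ S choose a witness
  have key : ∀ y ∈ S, ∃ F' : Submodule R K, F'.FG ∧ F' ≠ ⊥ ∧ F' ≤ E ∧ (y:K) ∈ s.toFun F' := by
    intro y hy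
    by_cases hy0 : y = 0
    · refine ⟨Submodule.span R {z}, Submodule.fg_span_singleton z, by simpa using hz0,
        by simpa [Submodule.span_le] using hzE, ?_⟩
      rw [hy0]; exact zero_mem _
    · exact (mem_starF s hE).1 (hle (Submodule.subset_span hy))
  choose! w hwfg hwne hwle hwmem using key
  classical
  set F' : Submodule R K := Submodule.span R {z} ⊔ S.sup w with hF'
  have hF'fg : F'.FG := Submodule.FG.sup (Submodule.fg_span_singleton z) (Submodule.fg_finset_sup S w
    (fun y hy => hwfg y hy))
  have hF'ne : F' ≠ ⊥ := by
    intro hb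
    have : Submodule.span R {z} ≤ ⊥ := le_sup_left.trans hb.le
    exact hz0 (by simpa using this)
  have hF'le : F' ≤ E := by
    refine sup_le (by simpa [Submodule.span_le] using hzE) (Finset.sup_le fun y hy => hwle y hy)
  have hFleF' : Submodule.span R (↑S : Set K) ≤ s.toFun F' := by
    rw [Submodule.span_le]
    intro y hy
    exact s.mono' _ _ (hwne y hy) hF'ne ((Finset.le_sup hy).trans le_sup_right) (hwmem y hy)
  refine (mem_starF s hE).2 ⟨F', hF'fg, hF'ne, hF'le, ?_⟩
  have : s.toFun (Submodule.span R (↑S : Set K)) ≤ s.toFun F' := by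
    calc s.toFun (Submodule.span R (↑S : Set K)) ≤ s.toFun (s.toFun F') :=
          s.mono' _ _ hne (fun hb => hF'ne (by
            simpa using (le_bot_iff.1 ((s.le_star' F' hF'ne).trans hb.le)))) hFleF'
      _ = s.toFun F' := s.idem' _ hF'ne
  exact this hxF

theorem submodule_ne_bot_iff {E : Submodule R K} : E ≠ ⊥ ↔ ∃ x ∈ E, x ≠ (0:K) := by
  constructor
  · exact Submodule.exists_mem_ne_zero_of_ne_bot
  · rintro ⟨x, hx, hx0⟩ hb
    rw [hb] at hx
    exact hx0 (by simpa using hx)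

theorem mul_ne_bot {A B : Submodule R K} (hA : A ≠ ⊥) (hB : B ≠ ⊥) : A * B ≠ ⊥ := by
  obtain ⟨a, ha, ha0⟩ := submodule_ne_bot_iff.1 hA
  obtain ⟨b, hb, hb0⟩ := submodule_ne_bot_iff.1 hB
  exact submodule_ne_bot_iff.2 ⟨a * b, Submodule.mul_mem_mul ha hb, mul_ne_zero ha0 hb0⟩

theorem star_mul_le {A : Submodule R K} (B : Submodule R K) (hA : A ≠ ⊥) :
    s.toFun A * B ≤ s.toFun (A * B) := by
  rw [Submodule.mul_le]
  intro a' ha' b hb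
  by_cases hb0 : b = 0
  · simp [hb0]
  have hsmul : b • A ≤ A * B := by
    intro x hx
    have hx' : x ∈ b • (A : Set K) := by rw [← Submodule.coe_pointwise_smul]; exact hx
    obtain ⟨y, hy, rfl⟩ := hx'
    show b • y ∈ A * B
    have hby : b • y = y * b := by rw [smul_eq_mul, mul_comm]
    rw [hby]
    exact Submodule.mul_mem_mul (show y ∈ A from hy) hb
  have hbA : b • A ≠ ⊥ := by
    obtain ⟨a, ha, ha0⟩ := submodule_ne_bot_iff.1 hA
    exact submodule_ne_bot_iff.2 ⟨b • a, Submodule.smul_mem_pointwise_smul a b A ha,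
      by simp [smul_eq_mul, mul_ne_zero hb0 ha0]⟩
  have h1 : a' * b ∈ s.toFun (b • A) := by
    rw [s.smul' b hb0 A hA]
    have := Submodule.smul_mem_pointwise_smul a' b (s.toFun A) ha'
    simpa [smul_eq_mul, mul_comm] using this
  exact s.mono' _ _ hbA (mul_ne_bot hA (submodule_ne_bot_iff.2 ⟨b, hb, hb0⟩)) hsmul h1

theorem star_mul_star_le {A B : Submodule R K} (hA : A ≠ ⊥) (hB : B ≠ ⊥) :
    s.toFun A * s.toFun B ≤ s.toFun (A * B) := by
  have hfA : s.toFun A ≠ ⊥ := fun h => hA (le_bot_iff.1 (h ▸ s.le_star' A hA))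
  have h1 : s.toFun B * s.toFun A ≤ s.toFun (B * s.toFun A) := star_mul_le s _ hB
  have h2 : B * s.toFun A ≤ s.toFun (A * B) := by
    rw [mul_comm]
    exact (star_mul_le s B hA).trans (le_of_eq rfl)
  have h3 : s.toFun (B * s.toFun A) ≤ s.toFun (A * B) := by
    have := s.mono' _ _ (mul_ne_bot hB hfA)
      (fun h => (mul_ne_bot hA hB) (le_bot_iff.1 (h ▸ s.le_star' _ (mul_ne_bot hA hB)))) h2
    exact this.trans (le_of_eq (s.idem' _ (mul_ne_bot hA hB)))
  calc s.toFun A * s.toFun B = s.toFun B * s.toFun A := mul_comm _ _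
    _ ≤ s.toFun (B * s.toFun A) := h1
    _ ≤ s.toFun (A * B) := h3

theorem starF_mul_starF_le {A B : Submodule R K} (hA : A ≠ ⊥) (hB : B ≠ ⊥) :
    starF s.toFun A * starF s.toFun B ≤ starF s.toFun (A * B) := by
  rw [Submodule.mul_le]
  intro x hx y hy
  obtain ⟨F₁, hfg₁, hne₁, hle₁, hx₁⟩ := (mem_starF s hA).1 hx
  obtain ⟨F₂, hfg₂, hne₂, hle₂, hy₂⟩ := (mem_starF s hB).1 hy
  refine (mem_starF s (mul_ne_bot hA hB)).2 ⟨F₁ * F₂, hfg₁.mul hfg₂, mul_ne_bot hne₁ hne₂,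
    mul_le_mul' hle₁ hle₂, ?_⟩
  exact star_mul_star_le s hne₁ hne₂ (Submodule.mul_mem_mul hx₁ hy₂)

theorem mem_idealSub {I : Ideal R} {x : K} :
    x ∈ (idealSub I : Submodule R K) ↔ ∃ a ∈ I, algebraMap R K a = x := by
  simp [idealSub, Submodule.mem_map, Algebra.linearMap_apply]

theorem idealSub_mono {I J : Ideal R} (h : I ≤ J) :
    (idealSub I : Submodule R K) ≤ idealSub J := Submodule.map_mono h

theorem idealSub_ne_bot (hinj : Function.Injective (algebraMap R K)) {I : Ideal R}
    (hI : I ≠ ⊥) : (idealSub I : Submodule R K) ≠ ⊥ := by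
  obtain ⟨a, ha, ha0⟩ := Submodule.exists_mem_ne_zero_of_ne_bot hI
  refine submodule_ne_bot_iff.2 ⟨algebraMap R K a, mem_idealSub.2 ⟨a, ha, rfl⟩, ?_⟩
  intro h
  exact ha0 (hinj (by simpa using h))

theorem idealSub_mul (I J : Ideal R) :
    (idealSub (I * J) : Submodule R K) = idealSub I * idealSub J := by
  have heq : Algebra.linearMap R K = (Algebra.ofId R K).toLinearMap := by
    ext x; rfl
  unfold idealSub
  rw [heq]
  exact Submodule.map_mul I J (Algebra.ofId R K)

/-- The quasi-closure of an ideal. -/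
def qClos (s : SemistarOp R K) (I : Ideal R) : Ideal R :=
  Submodule.comap (Algebra.linearMap R K) (starF s.toFun (idealSub I))

theorem le_qClos (hinj : Function.Injective (algebraMap R K)) {I : Ideal R} (hI : I ≠ ⊥) :
    I ≤ qClos s I := by
  intro a ha
  exact le_starF s (idealSub_ne_bot hinj hI) (mem_idealSub.2 ⟨a, ha, rfl⟩)

theorem qClos_quasi (hinj : Function.Injective (algebraMap R K)) {I : Ideal R} (hI : I ≠ ⊥)
    (h1 : (1 : K) ∉ starF s.toFun (idealSub I)) :
    QuasiIdeal (starF s.toFun) (qClos s I) ∧ qClos s I ≠ ⊤ := by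
  have hle : I ≤ qClos s I := le_qClos s hinj hI
  have hne : qClos s I ≠ ⊥ := fun h => hI (le_bot_iff.1 (h ▸ hle))
  have hstar : starF s.toFun (idealSub (qClos s I)) = starF s.toFun (idealSub I) := by
    refine le_antisymm ?_ (starF_mono s.toFun (idealSub_mono hle))
    have h2 : (idealSub (qClos s I) : Submodule R K) ≤ starF s.toFun (idealSub I) := by
      intro x hx
      obtain ⟨a, ha, rfl⟩ := mem_idealSub.1 hx
      exact ha
    calc starF s.toFun (idealSub (qClos s I))
        ≤ starF s.toFun (starF s.toFun (idealSub I)) := starF_mono s.toFun h2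
      _ = starF s.toFun (idealSub I) := starF_idem s (idealSub_ne_bot hinj hI)
  constructor
  · refine ⟨hne, ?_⟩
    rw [hstar]; rfl
  · intro h
    apply h1
    have h3 : (1 : R) ∈ qClos s I := h ▸ Submodule.mem_top
    have h2 : algebraMap R K (1 : R) ∈ starF s.toFun (idealSub I) := h3
    simpa using h2

theorem exists_forall_mem_idealSub {c : Set (Ideal R)} (hdir : DirectedOn (· ≤ ·) c)
    (hne : c.Nonempty) (S₀ : Finset K)
    (h : ∀ v ∈ S₀, ∃ J ∈ c, v ∈ (idealSub J : Submodule R K)) :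
    ∃ J ∈ c, ∀ v ∈ S₀, v ∈ (idealSub J : Submodule R K) := by
  classical
  induction S₀ using Finset.induction_on with
  | empty => obtain ⟨J, hJ⟩ := hne; exact ⟨J, hJ, by simp⟩
  | @insert a S₀ hanot ih =>
    obtain ⟨J₁, hJ₁, hall⟩ := ih (fun v hv => h v (Finset.mem_insert_of_mem hv))
    obtain ⟨J₂, hJ₂, ha⟩ := h a (Finset.mem_insert_self a S₀)
    obtain ⟨J, hJ, h₁, h₂⟩ := hdir J₁ hJ₁ J₂ hJ₂
    refine ⟨J, hJ, fun v hv => ?_⟩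
    rcases Finset.mem_insert.1 hv with rfl | hv
    · exact idealSub_mono h₂ ha
    · exact idealSub_mono h₁ (hall v hv)

theorem exists_quasiMax (hinj : Function.Injective (algebraMap R K)) {I : Ideal R}
    (hI : I ≠ ⊥) (h1 : (1 : K) ∉ starF s.toFun (idealSub I)) :
    ∃ Q : Ideal R, QuasiMax (starF s.toFun) Q ∧ I ≤ Q := by
  classical
  set S : Set (Ideal R) := {J | QuasiIdeal (starF s.toFun) J ∧ J ≠ ⊤ ∧ I ≤ J} with hS
  have hbase : qClos s I ∈ S := by
    obtain ⟨hq, hne⟩ := qClos_quasi s hinj hI h1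
    exact ⟨hq, hne, le_qClos s hinj hI⟩
  have hchain : ∀ c ⊆ S, IsChain (· ≤ ·) c → ∀ y ∈ c, ∃ ub ∈ S, ∀ z ∈ c, z ≤ ub := by
    intro c hcS hc y hy
    have hdir : DirectedOn (· ≤ ·) c := hc.directedOn
    have hmem : ∀ a : R, a ∈ sSup c ↔ ∃ J ∈ c, a ∈ J := fun a =>
      Submodule.mem_sSup_of_directed ⟨y, hy⟩ hdir
    have hyS := hcS hy
    have hIy : I ≤ y := hyS.2.2
    have hsne : sSup c ≠ ⊥ := by
      intro hb
      exact hyS.1.1 (le_bot_iff.1 (hb ▸ le_sSup hy))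
    have hIs : I ≤ sSup c := hIy.trans (le_sSup hy)
    refine ⟨sSup c, ⟨⟨hsne, ?_⟩, ?_, hIs⟩, fun z hz => le_sSup hz⟩
    · -- quasi-ideal property of the union
      refine le_antisymm ?_ ?_
      · intro x hx
        have hx' : algebraMap R K x ∈ starF s.toFun (idealSub (sSup c)) := hx
        obtain ⟨F, hfg, hne, hle, hmemF⟩ :=
          (mem_starF s (idealSub_ne_bot hinj hsne)).1 hx'
        obtain ⟨S₀, rfl⟩ := hfg
        have hv : ∀ v ∈ S₀, ∃ J ∈ c, v ∈ (idealSub J : Submodule R K) := by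
          intro v hv
          have : v ∈ (idealSub (sSup c) : Submodule R K) := hle (Submodule.subset_span hv)
          obtain ⟨a, ha, rfl⟩ := mem_idealSub.1 this
          obtain ⟨J, hJ, haJ⟩ := (hmem a).1 ha
          exact ⟨J, hJ, mem_idealSub.2 ⟨a, haJ, rfl⟩⟩
        obtain ⟨J, hJ, hall⟩ := exists_forall_mem_idealSub hdir ⟨y, hy⟩ S₀ hv
        have hFJ : Submodule.span R (↑S₀ : Set K) ≤ idealSub J := by
          rw [Submodule.span_le]; exact fun v hv => hall v hv
        have : algebraMap R K x ∈ starF s.toFun (idealSub J) :=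
          le_starF_of s.toFun ⟨S₀, rfl⟩ hne hFJ hmemF
        have hxJ : x ∈ J := by
          have hq := (hcS hJ).1.2
          rw [← hq]; exact this
        exact le_sSup hJ hxJ
      · intro a ha
        exact le_starF s (idealSub_ne_bot hinj hsne) (mem_idealSub.2 ⟨a, ha, rfl⟩)
    · -- properness
      intro ht
      have : (1 : R) ∈ sSup c := ht ▸ Submodule.mem_top
      obtain ⟨J, hJ, h1J⟩ := (hmem 1).1 this
      exact (hcS hJ).2.1 (Ideal.eq_top_iff_one J |>.2 h1J)
  obtain ⟨m, hxm, hmax⟩ := zorn_le_nonempty₀ S hchain (qClos s I) hbase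
  refine ⟨m, ⟨hmax.1.1, hmax.1.2.1, ?_⟩, (le_qClos s hinj hI).trans hxm⟩
  intro J hJq hJt hmJ
  have hJS : J ∈ S := ⟨hJq, hJt, hmax.1.2.2.trans hmJ⟩
  exact le_antisymm hmJ (hmax.2 hJS hmJ)

theorem one_mem_starF_sup (hinj : Function.Injective (algebraMap R K)) {Q : Ideal R}
    (hQ : QuasiMax (starF s.toFun) Q) {a : R} (ha : a ∉ Q) :
    (1 : K) ∈ starF s.toFun (idealSub (Q ⊔ Ideal.span {a})) := by
  by_contra h1
  have hQne : Q ≠ ⊥ := hQ.1.1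
  have hJa : Q ⊔ Ideal.span {a} ≠ ⊥ := fun h => hQne (le_bot_iff.1 (h ▸ le_sup_left))
  obtain ⟨hq, hne⟩ := qClos_quasi s hinj hJa h1
  have hQle : Q ≤ qClos s (Q ⊔ Ideal.span {a}) :=
    le_sup_left.trans (le_qClos s hinj hJa)
  have heq : Q = qClos s (Q ⊔ Ideal.span {a}) := hQ.2.2 _ hq hne hQle
  apply ha
  rw [heq]
  exact (le_sup_right.trans (le_qClos s hinj hJa)) (Ideal.mem_span_singleton_self a)

theorem quasiMax_isPrime (hinj : Function.Injective (algebraMap R K)) {Q : Ideal R}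
    (hQ : QuasiMax (starF s.toFun) Q) : Q.IsPrime := by
  refine ⟨hQ.2.1, ?_⟩
  intro a b hab
  by_contra hcon
  push_neg at hcon
  obtain ⟨ha, hb⟩ := hcon
  have h1a := one_mem_starF_sup s hinj hQ ha
  have h1b := one_mem_starF_sup s hinj hQ hb
  have hQne : Q ≠ ⊥ := hQ.1.1
  have hJa : Q ⊔ Ideal.span {a} ≠ ⊥ := fun h => hQne (le_bot_iff.1 (h ▸ le_sup_left))
  have hJb : Q ⊔ Ideal.span {b} ≠ ⊥ := fun h => hQne (le_bot_iff.1 (h ▸ le_sup_left))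
  have hmul : (Q ⊔ Ideal.span {a}) * (Q ⊔ Ideal.span {b}) ≤ Q := by
    rw [Submodule.sup_mul, Submodule.mul_sup, Submodule.mul_sup]
    refine sup_le (sup_le Ideal.mul_le_right Ideal.mul_le_left)
      (sup_le Ideal.mul_le_right ?_)
    rw [Ideal.span_singleton_mul_span_singleton, Ideal.span_le]
    simpa using hab
  have h1 : (1 : K) ∈ starF s.toFun (idealSub Q) := by
    have hmm : (1 : K) * 1 ∈
        starF s.toFun (idealSub (Q ⊔ Ideal.span {a})) *
          starF s.toFun (idealSub (Q ⊔ Ideal.span {b})) :=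
      Submodule.mul_mem_mul h1a h1b
    have h2 := starF_mul_starF_le s (idealSub_ne_bot hinj hJa) (idealSub_ne_bot hinj hJb) hmm
    rw [← idealSub_mul] at h2
    have h3 := starF_mono s.toFun (idealSub_mono (K := K) hmul) h2
    simpa using h3
  have : (1 : R) ∈ Q := by
    have hcomap : (1 : R) ∈ Submodule.comap (Algebra.linearMap R K)
        (starF s.toFun (idealSub Q)) := by
      simpa using h1
    rwa [hQ.1.2] at hcomap
  exact hQ.2.1 (Ideal.eq_top_iff_one Q |>.2 this)

theorem one_notMem_starF_of_le_quasi {J Q : Ideal R}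
    (hQ : QuasiIdeal (starF s.toFun) Q) (hQt : Q ≠ ⊤) (hle : J ≤ Q) :
    (1 : K) ∉ starF s.toFun (idealSub J) := by
  intro h1
  have h2 : (1 : K) ∈ starF s.toFun (idealSub Q) := starF_mono s.toFun (idealSub_mono hle) h1
  have : (1 : R) ∈ Q := by
    rw [← hQ.2]
    simpa using h2
  exact hQt (Ideal.eq_top_iff_one Q |>.2 this)

theorem one_ne_bot' : (1 : Submodule R K) ≠ ⊥ := by
  intro h
  have : (1 : K) ∈ (⊥ : Submodule R K) := h ▸ (Submodule.one_le.1 le_rfl)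
  simp at this

theorem starF_eq_one_iff {X : Submodule R K} (hle : X ≤ 1) (hX : X ≠ ⊥) :
    starF s.toFun X = s.toFun 1 ↔ (1 : K) ∈ starF s.toFun X := by
  constructor
  · intro h
    rw [h]
    exact s.le_star' 1 one_ne_bot' (Submodule.one_le.1 le_rfl)
  · intro h1
    refine le_antisymm ((starF_mono s.toFun hle).trans (le_of_eq (starF_one s))) ?_
    have hone : (1 : Submodule R K) ≤ starF s.toFun X := Submodule.one_le.2 h1
    have hgne : starF s.toFun X ≠ ⊥ := by
      intro hb
      rw [hb] at hone
      exact one_ne_bot' (le_bot_iff.1 hone)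
    calc s.toFun 1 = starF s.toFun 1 := (starF_one s).symm
      _ ≤ starF s.toFun (starF s.toFun X) := starF_mono s.toFun hone
      _ = starF s.toFun X := starF_idem s hX

end StarFLemmas

section OverringLemmas

variable {D K : Type*} [CommRing D] [Field K] [Algebra D K]
variable {T : Subalgebra D K}

theorem algebraMap_T_eq (t : ↥T) : algebraMap ↥T K t = (t : K) := rfl

theorem mem_one_T {x : K} : x ∈ (1 : Submodule ↥T K) ↔ x ∈ T := by
  rw [Submodule.one_eq_range]
  constructor
  · rintro ⟨t, rfl⟩
    exact t.2
  · intro hx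
    exact ⟨⟨x, hx⟩, rfl⟩

theorem extT_le_one (I : Ideal D) : extT T (idealSub I) ≤ (1 : Submodule ↥T K) := by
  rw [extT, Submodule.span_le]
  intro x hx
  obtain ⟨a, _, rfl⟩ := mem_idealSub.1 hx
  exact mem_one_T.2 (T.algebraMap_mem a)

theorem extT_mono {E E' : Submodule D K} (h : E ≤ E') : extT T E ≤ extT T E' :=
  Submodule.span_mono h

theorem extT_idealSub (I : Ideal D) :
    extT T (idealSub I) = idealSub (I.map (algebraMap D ↥T)) := by
  unfold extT idealSub
  rw [Ideal.map, Ideal.span, Submodule.map_span]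
  congr 1
  rw [Submodule.map_coe]
  rw [Set.image_image]
  rfl

theorem mem_Dloc {P : Ideal D} (hP : P.IsPrime) {x : K} :
    x ∈ Dloc (K := K) P ↔ ∃ r : D, r ∉ P ∧ ∃ d : D, algebraMap D K r * x = algebraMap D K d := by
  have honeP : (1 : D) ∉ P := fun h => hP.ne_top (Ideal.eq_top_iff_one P |>.2 h)
  let A : Subalgebra D K :=
    { carrier := {x : K | ∃ r : D, r ∉ P ∧ ∃ d : D, algebraMap D K r * x = algebraMap D K d}
      mul_mem' := by
        rintro x y ⟨r₁, hr₁, d₁, hd₁⟩ ⟨r₂, hr₂, d₂, hd₂⟩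
        refine ⟨r₁ * r₂, fun h => ((hP.mem_or_mem h).elim hr₁ hr₂), d₁ * d₂, ?_⟩
        rw [map_mul, map_mul, ← hd₁, ← hd₂]
        ring
      one_mem' := ⟨1, honeP, 1, by simp⟩
      add_mem' := by
        rintro x y ⟨r₁, hr₁, d₁, hd₁⟩ ⟨r₂, hr₂, d₂, hd₂⟩
        refine ⟨r₁ * r₂, fun h => ((hP.mem_or_mem h).elim hr₁ hr₂), r₂ * d₁ + r₁ * d₂, ?_⟩
        rw [map_add, map_mul, map_mul, map_mul, ← hd₁, ← hd₂]
        ring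
      zero_mem' := ⟨1, honeP, 0, by simp⟩
      algebraMap_mem' := fun d => ⟨1, honeP, d, by simp⟩ }
  have hgen : {x : K | ∃ r : D, r ∉ P ∧ algebraMap D K r * x ∈ (⊥ : Subalgebra D K)}
      = (A : Set K) := by
    ext y
    simp only [Set.mem_setOf_eq, Algebra.mem_bot, Set.mem_range]
    constructor
    · rintro ⟨r, hr, d, hd⟩; exact ⟨r, hr, d, hd.symm⟩
    · rintro ⟨r, hr, d, hd⟩; exact ⟨r, hr, d, hd.symm⟩
  have hA : Dloc (K := K) P = A := by
    rw [Dloc, hgen]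
    exact Algebra.adjoin_eq A
  rw [hA]
  exact Iff.rfl

theorem mem_TlocQ {Q : Ideal ↥T} (hQ : Q.IsPrime) {x : K} :
    x ∈ TlocQ T Q ↔ ∃ t : ↥T, t ∉ Q ∧ (t : K) * x ∈ T := by
  have honeQ : (1 : ↥T) ∉ Q := fun h => hQ.ne_top (Ideal.eq_top_iff_one Q |>.2 h)
  let A : Subalgebra D K :=
    { carrier := {x : K | ∃ t : ↥T, t ∉ Q ∧ (t : K) * x ∈ T}
      mul_mem' := by
        rintro x y ⟨t₁, ht₁, hm₁⟩ ⟨t₂, ht₂, hm₂⟩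
        refine ⟨t₁ * t₂, fun h => ((hQ.mem_or_mem h).elim ht₁ ht₂), ?_⟩
        have : ((t₁ * t₂ : ↥T) : K) * (x * y) = ((t₁ : K) * x) * ((t₂ : K) * y) := by
          push_cast; ring
        rw [this]
        exact T.mul_mem hm₁ hm₂
      one_mem' := ⟨1, honeQ, by simpa using T.one_mem⟩
      add_mem' := by
        rintro x y ⟨t₁, ht₁, hm₁⟩ ⟨t₂, ht₂, hm₂⟩
        refine ⟨t₁ * t₂, fun h => ((hQ.mem_or_mem h).elim ht₁ ht₂), ?_⟩
        have : ((t₁ * t₂ : ↥T) : K) * (x + y) =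
            (t₂ : K) * ((t₁ : K) * x) + (t₁ : K) * ((t₂ : K) * y) := by
          push_cast; ring
        rw [this]
        exact T.add_mem (T.mul_mem t₂.2 hm₁) (T.mul_mem t₁.2 hm₂)
      zero_mem' := ⟨1, honeQ, by simpa using T.zero_mem⟩
      algebraMap_mem' := fun d => ⟨1, honeQ, by simpa using T.algebraMap_mem d⟩ }
  have hA : TlocQ T Q = A := by
    rw [TlocQ]
    exact Algebra.adjoin_eq A
  rw [hA]
  rfl

theorem locSub_one_coe {Q : Ideal ↥T} (hQ : Q.IsPrime) :
    ((locSub Q (1 : Submodule ↥T K) : Submodule ↥T K) : Set K) =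
      {x : K | ∃ t : ↥T, t ∉ Q ∧ (t : K) * x ∈ T} := by
  have honeQ : (1 : ↥T) ∉ Q := fun h => hQ.ne_top (Ideal.eq_top_iff_one Q |>.2 h)
  let M : Submodule ↥T K :=
    { carrier := {x : K | ∃ t : ↥T, t ∉ Q ∧ (t : K) * x ∈ T}
      add_mem' := by
        rintro x y ⟨t₁, ht₁, hm₁⟩ ⟨t₂, ht₂, hm₂⟩
        refine ⟨t₁ * t₂, fun h => ((hQ.mem_or_mem h).elim ht₁ ht₂), ?_⟩
        have : ((t₁ * t₂ : ↥T) : K) * (x + y) =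
            (t₂ : K) * ((t₁ : K) * x) + (t₁ : K) * ((t₂ : K) * y) := by
          push_cast; ring
        rw [this]
        exact T.add_mem (T.mul_mem t₂.2 hm₁) (T.mul_mem t₁.2 hm₂)
      zero_mem' := ⟨1, honeQ, by simpa using T.zero_mem⟩
      smul_mem' := by
        rintro c x ⟨t, ht, hm⟩
        refine ⟨t, ht, ?_⟩
        have : (t : K) * (c • x) = (c : K) * ((t : K) * x) := by
          rw [Algebra.smul_def, algebraMap_T_eq]; ring
        rw [this]
        exact T.mul_mem c.2 hm }
  have hgen : {x : K | ∃ s : ↥T, s ∉ Q ∧ algebraMap ↥T K s * x ∈ (1 : Submodule ↥T K)} =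
      {x : K | ∃ t : ↥T, t ∉ Q ∧ (t : K) * x ∈ T} := by
    ext y
    simp only [Set.mem_setOf_eq, algebraMap_T_eq, mem_one_T]
  rw [locSub, hgen]
  have : {x : K | ∃ t : ↥T, t ∉ Q ∧ (t : K) * x ∈ T} = (M : Set K) := rfl
  rw [this, Submodule.span_eq]

theorem Dloc_subset_TlocQ {Q : Ideal ↥T} (hQ : Q.IsPrime) :
    (Dloc (K := K) (Q.comap (algebraMap D ↥T)) : Set K) ⊆ (TlocQ T Q : Set K) := by
  intro x hx
  have hP : (Q.comap (algebraMap D ↥T)).IsPrime := Ideal.IsPrime.comap _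
  obtain ⟨r, hr, d, hd⟩ := (mem_Dloc hP).1 hx
  refine (mem_TlocQ hQ).2 ⟨algebraMap D ↥T r, hr, ?_⟩
  rw [Subalgebra.coe_algebraMap, hd]
  exact T.algebraMap_mem d

theorem TlocQ_subset_Dloc {Q : Ideal ↥T} (hQ : Q.IsPrime)
    (hT : (T : Set K) ⊆ (Dloc (K := K) (Q.comap (algebraMap D ↥T)) : Set K)) :
    (TlocQ T Q : Set K) ⊆ (Dloc (K := K) (Q.comap (algebraMap D ↥T)) : Set K) := by
  set P := Q.comap (algebraMap D ↥T) with hPdef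
  have hP : P.IsPrime := Ideal.IsPrime.comap _
  intro y hy
  obtain ⟨t, htQ, hty⟩ := (mem_TlocQ hQ).1 hy
  -- t ∈ T ⊆ D_P
  obtain ⟨s, hsP, a, hsa⟩ := (mem_Dloc hP).1 (hT t.2)
  -- a ∉ P
  have haP : a ∉ P := by
    intro haP
    have h1 : algebraMap D ↥T a = algebraMap D ↥T s * t := by
      apply Subtype.ext
      push_cast [Subalgebra.coe_algebraMap]
      exact hsa.symm
    have h2 : algebraMap D ↥T s * t ∈ Q := h1 ▸ haP
    rcases hQ.mem_or_mem h2 with h | h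
    · exact hsP h
    · exact htQ h
  -- t*y ∈ T ⊆ D_P
  obtain ⟨s₂, hs₂P, d, hd⟩ := (mem_Dloc hP).1 (hT hty)
  refine (mem_Dloc hP).2 ⟨s₂ * a, fun h => ((hP.mem_or_mem h).elim hs₂P haP), s * d, ?_⟩
  have : algebraMap D K (s₂ * a) * y = algebraMap D K s * (algebraMap D K s₂ * ((t : K) * y)) := by
    rw [map_mul, ← hsa]; ring
  rw [this, hd, ← map_mul]

theorem T_subset_locSub_one {Q : Ideal ↥T} (hQ : Q ≠ ⊤) :
    (T : Set K) ⊆ ((locSub Q (1 : Submodule ↥T K) : Submodule ↥T K) : Set K) := by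
  intro x hx
  apply Submodule.subset_span
  exact ⟨1, fun h => hQ (Ideal.eq_top_iff_one Q |>.2 h), by simpa [algebraMap_T_eq] using mem_one_T.2 hx⟩

end OverringLemmas

set_option maxHeartbeats 1000000 in
/-- **Proposition 4.4 (i)–(iv).** Characterizations of semistar flatness. -/
theorem flat_tfae
    {D K : Type*} [CommRing D] [IsDomain D] [Field K] [Algebra D K] [IsFractionRing D K]
    (T : Subalgebra D K) (s : SemistarOp D K) (s' : SemistarOp ↥T K) :
    List.TFAE [
      -- (i) T is (⋆,⋆')-flat over D
      FlatF s.toFun T s'.toFun,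
      -- (ii) T is (⋆,⋆')-linked to D and, for each prime P of D,
      --      (PT)^{⋆'_f} = T^{⋆'} or T ⊆ D_P
      LinkedF s.toFun T s'.toFun ∧
        ∀ P : Ideal D, P.IsPrime →
          (starF s'.toFun (extT T (idealSub P)) = s'.toFun 1 ∨ T ≤ Dloc P),
      -- (iii) T is (⋆,⋆')-linked to D and ((D :_D xD)T)^{⋆'_f} = T^{⋆'} for 0 ≠ x ∈ T
      LinkedF s.toFun T s'.toFun ∧
        ∀ x : K, x ∈ T → x ≠ 0 →
          starF s'.toFun (extT T (idealSub
            (Submodule.comap (LinearMap.toSpanSingleton D K x) (1 : Submodule D K)))) =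
          s'.toFun 1,
      -- (iv) T is (⋆,⋆')-linked to D and T^{⋆̃'} = ∩ {D_{Q∩D} : Q ∈ M(⋆'_f)}
      LinkedF s.toFun T s'.toFun ∧
        ((tildeOp s'.toFun (1 : Submodule ↥T K) : Submodule ↥T K) : Set K) =
          ⋂ Q : {Q : Ideal ↥T // QuasiMax (starF s'.toFun) Q},
            ((Dloc ((Q : Ideal ↥T).comap (algebraMap D ↥T)) : Subalgebra D K) : Set K)] := by
  classical
  have hinjD : Function.Injective (algebraMap D K) := IsFractionRing.injective D K
  have hinjT : Function.Injective (algebraMap ↥T K) := fun a b h => Subtype.ext h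
  -- (1) → (3)
  tfae_have 1 → 3 := by
    rintro ⟨hlink, hflat⟩
    refine ⟨hlink, ?_⟩
    intro x hxT hx0
    set I : Ideal D := Submodule.comap (LinearMap.toSpanSingleton D K x) (1 : Submodule D K)
      with hIdef
    obtain ⟨⟨a, sden⟩, hxs⟩ := IsLocalization.surj (nonZeroDivisors D) x
    have hs0 : (sden : D) ≠ 0 := nonZeroDivisors.ne_zero sden.2
    have hsI : (sden : D) ∈ I := by
      rw [hIdef]
      simp only [Submodule.mem_comap, LinearMap.toSpanSingleton_apply]
      exact Submodule.mem_one.2 ⟨a, by rw [Algebra.smul_def] at *; rw [mul_comm] at hxs; exact hxs.symm⟩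
    have hXne : extT T (idealSub I) ≠ ⊥ := by
      refine submodule_ne_bot_iff.2 ⟨algebraMap D K (sden : D), ?_, ?_⟩
      · exact Submodule.subset_span (mem_idealSub.2 ⟨(sden : D), hsI, rfl⟩)
      · intro h
        exact hs0 (hinjD (by simpa using h))
    refine (starF_eq_one_iff s' (extT_le_one I) hXne).2 ?_
    by_contra h1
    rw [extT_idealSub] at h1 hXne
    have hJne : I.map (algebraMap D ↥T) ≠ ⊥ := by
      intro h
      rw [h] at hXne
      exact hXne (by simp [idealSub])
    obtain ⟨Q, hQmax, hJQ⟩ := exists_quasiMax s' hinjT hJne h1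
    have hQprime : Q.IsPrime := quasiMax_isPrime s' hinjT hQmax
    have hloc := hflat Q ⟨hQmax.1, hQprime⟩
    have hxTQ : x ∈ TlocQ T Q := (mem_TlocQ hQprime).2
      ⟨1, fun h => hQprime.ne_top (Ideal.eq_top_iff_one Q |>.2 h), by simpa using hxT⟩
    rw [← hloc] at hxTQ
    have hPprime : (Q.comap (algebraMap D ↥T)).IsPrime := Ideal.IsPrime.comap _
    obtain ⟨r, hrP, d, hrd⟩ := (mem_Dloc hPprime).1 hxTQ
    apply hrP
    have hrI : r ∈ I := by
      rw [hIdef]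
      simp only [Submodule.mem_comap, LinearMap.toSpanSingleton_apply]
      exact Submodule.mem_one.2 ⟨d, by rw [Algebra.smul_def]; exact hrd.symm⟩
    exact Ideal.mem_comap.2 (hJQ (Ideal.mem_map_of_mem _ hrI))
  -- (3) → (2)
  tfae_have 3 → 2 := by
    rintro ⟨hlink, h3⟩
    refine ⟨hlink, ?_⟩
    intro P hP
    by_cases hPT : starF s'.toFun (extT T (idealSub P)) = s'.toFun 1
    · exact Or.inl hPT
    right
    intro x hxT
    by_cases hx0 : x = 0
    · rw [hx0]; exact (Dloc P).zero_mem
    set I : Ideal D := Submodule.comap (LinearMap.toSpanSingleton D K x) (1 : Submodule D K)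
      with hIdef
    have hstar := h3 x hxT hx0
    have hnle : ¬ I ≤ P := by
      intro hIP
      apply hPT
      refine le_antisymm ((starF_mono s'.toFun (extT_le_one P)).trans (le_of_eq (starF_one s'))) ?_
      rw [← hstar]
      exact starF_mono s'.toFun (extT_mono (idealSub_mono hIP))
    obtain ⟨r, hrI, hrP⟩ := SetLike.not_le_iff_exists.1 hnle
    apply Algebra.subset_adjoin
    refine ⟨r, hrP, ?_⟩
    have : r • x ∈ (1 : Submodule D K) := hrI
    obtain ⟨d, hd⟩ := Submodule.mem_one.1 this
    exact Algebra.mem_bot.2 ⟨d, by rw [hd, Algebra.smul_def]⟩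
  -- (2) → (1)
  tfae_have 2 → 1 := by
    rintro ⟨hlink, h2⟩
    refine ⟨hlink, ?_⟩
    rintro Q ⟨hQquasi, hQprime⟩
    set P := Q.comap (algebraMap D ↥T) with hPdef
    have hPprime : P.IsPrime := Ideal.IsPrime.comap _
    have hne : ¬ (starF s'.toFun (extT T (idealSub P)) = s'.toFun 1) := by
      intro heq
      have h1 : (1 : K) ∈ starF s'.toFun (extT T (idealSub P)) := by
        rw [heq]
        exact s'.le_star' 1 one_ne_bot' (Submodule.one_le.1 le_rfl)
      have hle : extT T (idealSub P) ≤ idealSub Q := by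
        rw [extT_idealSub]
        exact idealSub_mono (Ideal.map_le_iff_le_comap.2 le_rfl)
      have h2 := starF_mono s'.toFun hle h1
      exact one_notMem_starF_of_le_quasi s' hQquasi hQprime.ne_top le_rfl h2
    have hT : T ≤ Dloc P := (h2 P hPprime).resolve_left hne
    refine le_antisymm ?_ ?_
    · exact fun x hx => Dloc_subset_TlocQ hQprime hx
    · exact fun x hx => TlocQ_subset_Dloc hQprime (fun y hy => hT hy) hx
  -- (1) → (4)
  tfae_have 1 → 4 := by
    rintro ⟨hlink, hflat⟩
    refine ⟨hlink, ?_⟩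
    ext x
    simp only [SetLike.mem_coe, Set.mem_iInter]
    rw [tildeOp]
    constructor
    · intro hx Q
      have hmem : x ∈ locSub Q.1 (1 : Submodule ↥T K) :=
        (Submodule.mem_iInf _).1 ((Submodule.mem_iInf _).1 hx Q.1) Q.2
      have hprime : Q.1.IsPrime := quasiMax_isPrime s' hinjT Q.2
      rw [hflat Q.1 ⟨Q.2.1, hprime⟩]
      have hxset : x ∈ ((locSub Q.1 (1 : Submodule ↥T K) : Submodule ↥T K) : Set K) := hmem
      rw [locSub_one_coe hprime] at hxset
      exact (mem_TlocQ hprime).2 hxset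
    · intro hx
      refine (Submodule.mem_iInf _).2 fun Q => (Submodule.mem_iInf _).2 fun hQ => ?_
      have hprime : Q.IsPrime := quasiMax_isPrime s' hinjT hQ
      have hxD := hx ⟨Q, hQ⟩
      rw [hflat Q ⟨hQ.1, hprime⟩] at hxD
      have hxset : x ∈ ((locSub Q (1 : Submodule ↥T K) : Submodule ↥T K) : Set K) := by
        rw [locSub_one_coe hprime]
        exact (mem_TlocQ hprime).1 hxD
      exact hxset
  -- (4) → (2)
  tfae_have 4 → 2 := by
    rintro ⟨hlink, h4⟩
    refine ⟨hlink, ?_⟩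
    intro P hP
    by_cases hPb : P = ⊥
    · right
      intro x hxT
      obtain ⟨⟨a, sden⟩, hxs⟩ := IsLocalization.surj (nonZeroDivisors D) x
      have hs0 : (sden : D) ≠ 0 := nonZeroDivisors.ne_zero sden.2
      apply Algebra.subset_adjoin
      refine ⟨(sden : D), ?_, Algebra.mem_bot.2 ⟨a, by rw [← hxs]; ring⟩⟩
      rw [hPb]
      simpa using hs0
    by_cases heq : starF s'.toFun (extT T (idealSub P)) = s'.toFun 1
    · exact Or.inl heq
    right
    have hXne : extT T (idealSub P) ≠ ⊥ := by
      obtain ⟨p, hpP, hp0⟩ := Submodule.exists_mem_ne_zero_of_ne_bot hPb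
      refine submodule_ne_bot_iff.2 ⟨algebraMap D K p, ?_, ?_⟩
      · exact Submodule.subset_span (mem_idealSub.2 ⟨p, hpP, rfl⟩)
      · intro h
        exact hp0 (hinjD (by simpa using h))
    have h1 : (1 : K) ∉ starF s'.toFun (extT T (idealSub P)) := by
      intro h
      exact heq ((starF_eq_one_iff s' (extT_le_one P) hXne).2 h)
    rw [extT_idealSub] at h1 hXne
    have hJne : P.map (algebraMap D ↥T) ≠ ⊥ := by
      intro h
      rw [h] at hXne
      exact hXne (by simp [idealSub])
    obtain ⟨Q, hQmax, hJQ⟩ := exists_quasiMax s' hinjT hJne h1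
    have hQprime : Q.IsPrime := quasiMax_isPrime s' hinjT hQmax
    have hPle : P ≤ Q.comap (algebraMap D ↥T) := fun p hp =>
      Ideal.mem_comap.2 (hJQ (Ideal.mem_map_of_mem _ hp))
    intro x hxT
    have hxtilde : x ∈ ((tildeOp s'.toFun (1 : Submodule ↥T K) : Submodule ↥T K) : Set K) := by
      rw [tildeOp]
      exact (Submodule.mem_iInf _).2 fun Q' => (Submodule.mem_iInf _).2 fun hQ' =>
        T_subset_locSub_one hQ'.2.1 hxT
    rw [h4] at hxtilde
    have hxD : x ∈ Dloc (K := K) (Q.comap (algebraMap D ↥T)) := by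
      have := Set.mem_iInter.1 hxtilde ⟨Q, hQmax⟩
      exact this
    have hPprime : (Q.comap (algebraMap D ↥T)).IsPrime := Ideal.IsPrime.comap _
    obtain ⟨r, hr, d, hd⟩ := (mem_Dloc hPprime).1 hxD
    exact (mem_Dloc hP).2 ⟨r, fun h => hr (hPle h), d, hd⟩
  tfae_finish
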